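/- If a binary sequence c of length n satisfies c_i = c_{i+p} for all i ∈ [1, n-p] (c has period p) and also c_i = c_{i+q} for all i ∈ [1, n-q] (c has period q) with p + q ≤ n, then c has period gcd(p,q), i.e., c_i = c_{i+gcd(p,q)} for all i ∈ [1, n - gcd(p,q)]. -/
import Mathlib

lemma fw_aux (m : ℕ) : ∀ (n p q : ℕ) (c : ℕ → Bool), p + q ≤ m → p + q ≤ n →
    (∀ i, 1 ≤ i → i + p ≤ n → c i = c (i + p)) →
    (∀ i, 1 ≤ i → i + q ≤ n → c i = c (i + q)) →
    ∀ i, 1 ≤ i → i + Nat.gcd p q ≤ n → c i = c (i + Nat.gcd p q) := by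
  induction m with
  | zero =>
    intro n p q c hm hn hp hq i hi hin
    have hp0 : p = 0 := by omega
    have hq0 : q = 0 := by omega
    simp [hp0, hq0]
  | succ m ih =>
    intro n p q c hm hn hp hq i hi hin
    rcases le_or_gt p q with hle | hlt
    · rcases Nat.eq_zero_or_pos p with h0 | hpos
      · subst h0
        simpa [Nat.gcd_zero_left] using hq i hi (by simpa [Nat.gcd_zero_left] using hin)
      · -- periods p and q - p
        have hq' : ∀ i, 1 ≤ i → i + (q - p) ≤ n → c i = c (i + (q - p)) := by
          intro j hj hjn
          rcases le_or_gt (j + q) n with h | h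
          · have e1 : c (j + (q - p)) = c (j + (q - p) + p) := hp _ (by omega) (by omega)
            have e2 : c j = c (j + q) := hq _ hj h
            have : j + (q - p) + p = j + q := by omega
            rw [e1, this, ← e2]
          · have hj1 : 1 ≤ j - p := by omega
            have e1 : c (j - p) = c (j - p + p) := hp _ hj1 (by omega)
            have e2 : c (j - p) = c (j - p + q) := hq _ hj1 (by omega)
            have h1 : j - p + p = j := by omega
            have h2 : j - p + q = j + (q - p) := by omega
            rw [h1] at e1
            rw [h2] at e2
            rw [← e1, e2]
        have hg : Nat.gcd p (q - p) = Nat.gcd p q := Nat.gcd_sub_self_right hle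
        have := ih n p (q - p) c (by omega) (by omega) hp hq' i hi (by omega)
        rwa [hg] at this
    · rcases Nat.eq_zero_or_pos q with h0 | hqos
      · subst h0
        simpa [Nat.gcd_zero_right] using hp i hi (by simpa [Nat.gcd_zero_right] using hin)
      · have hp' : ∀ i, 1 ≤ i → i + (p - q) ≤ n → c i = c (i + (p - q)) := by
          intro j hj hjn
          rcases le_or_gt (j + p) n with h | h
          · have e1 : c (j + (p - q)) = c (j + (p - q) + q) := hq _ (by omega) (by omega)
            have e2 : c j = c (j + p) := hp _ hj h
            have : j + (p - q) + q = j + p := by omega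
            rw [e1, this, ← e2]
          · have hj1 : 1 ≤ j - q := by omega
            have e1 : c (j - q) = c (j - q + q) := hq _ hj1 (by omega)
            have e2 : c (j - q) = c (j - q + p) := hp _ hj1 (by omega)
            have h1 : j - q + q = j := by omega
            have h2 : j - q + p = j + (p - q) := by omega
            rw [h1] at e1
            rw [h2] at e2
            rw [← e1, e2]
        have hg : Nat.gcd (p - q) q = Nat.gcd p q := Nat.gcd_sub_self_left hlt.le
        have := ih n (p - q) q c (by omega) (by omega) hp' hq i hi (by omega)
        rwa [hg] at this

/-- Fine–Wilf: if a binary sequence `c` (1-based, positions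
`[1,n]`) has periods `p` and `q` with `p + q ≤ n`, then it has period
`gcd(p,q)`. -/
theorem stmt3 (n p q : ℕ) (c : ℕ → Bool)
    (hpq : p + q ≤ n)
    (hp : ∀ i, 1 ≤ i → i + p ≤ n → c i = c (i + p))
    (hq : ∀ i, 1 ≤ i → i + q ≤ n → c i = c (i + q)) :
    ∀ i, 1 ≤ i → i + Nat.gcd p q ≤ n → c i = c (i + Nat.gcd p q) :=
  fw_aux (p + q) n p q c le_rfl hpq hp hq
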